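/- Let Δ be a simplicial forest with s facets. Then the incidence matrix of Δ (rows indexed by facets, columns by vertices, entry 1 if the vertex lies in the facet and 0 otherwise) has some s × s minor equal to 1; in particular, the greatest common divisor of its maximal minors is 1. -/

import Mathlib

open Finset

/-- A facet `F` of the family `𝓖` (of facets of a simplicial complex) is a leaf. -/
def IsLeaf {V : Type*} [DecidableEq V] (𝓖 : Finset (Finset V)) (F : Finset V) : Prop :=
  F ∈ 𝓖 ∧ ((∀ F' ∈ 𝓖, F' = F) ∨
    ∃ G ∈ 𝓖, G ≠ F ∧ ∀ F' ∈ 𝓖, F' ≠ F → F' ∩ F ⊆ G ∩ F)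

/-- A family of facets is a simplicial forest if every nonempty subfamily has a leaf. -/
def IsForest {V : Type*} [DecidableEq V] (𝓕 : Finset (Finset V)) : Prop :=
  ∀ 𝓖 ⊆ 𝓕, 𝓖.Nonempty → ∃ F, IsLeaf 𝓖 F

/-- Key combinatorial lemma: the facets of a forest can be ordered so that each has a
"free vertex" not belonging to any later facet. -/
lemma forest_order {V : Type*} [DecidableEq V] :
    ∀ n : ℕ, ∀ 𝓕 : Finset (Finset V), 𝓕.card = n → IsForest 𝓕 →
    (∀ F ∈ 𝓕, ∀ G ∈ 𝓕, F ⊆ G → F = G) → (∀ F ∈ 𝓕, F.Nonempty) →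
    ∃ (e : Fin n ≃ {F // F ∈ 𝓕}) (v : Fin n → V),
      (∀ i, v i ∈ (e i).1) ∧ (∀ i j : Fin n, j < i → v j ∉ (e i).1) := by
  intro n
  induction n with
  | zero =>
    intro 𝓕 hcard _ _ _
    have hempty : 𝓕 = ∅ := Finset.card_eq_zero.mp hcard
    have hE : IsEmpty {F // F ∈ 𝓕} := by
      subst hempty; exact ⟨fun x => Finset.notMem_empty _ x.2⟩
    exact ⟨Equiv.equivOfIsEmpty _ _, Fin.elim0, fun i => i.elim0, fun i => i.elim0⟩
  | succ n ih =>
    intro 𝓕 hcard hforest hfacet hne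
    have hnonempty : 𝓕.Nonempty := Finset.card_pos.mp (by omega)
    obtain ⟨F, hleaf⟩ := hforest 𝓕 (subset_refl _) hnonempty
    obtain ⟨hF, hcase⟩ := hleaf
    -- find a free vertex of F
    have hfree : ∃ vF ∈ F, ∀ F' ∈ 𝓕, F' ≠ F → vF ∉ F' := by
      rcases hcase with h | ⟨G, hG, hGF, hjoint⟩
      · obtain ⟨vF, hvF⟩ := hne F hF
        exact ⟨vF, hvF, fun F' hF' hne' => absurd (h F' hF') hne'⟩
      · have hnsub : ¬ F ⊆ G := fun hsub => hGF (hfacet F hF G hG hsub).symm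
        obtain ⟨vF, hvFF, hvFG⟩ := Finset.not_subset.mp hnsub
        refine ⟨vF, hvFF, fun F' hF' hne' hvF' => ?_⟩
        exact hvFG (Finset.mem_of_mem_inter_left (hjoint F' hF' hne' (Finset.mem_inter.mpr ⟨hvF', hvFF⟩)))
    obtain ⟨vF, hvFF, hvFfree⟩ := hfree
    set 𝓕' := 𝓕.erase F with h𝓕'
    have hsub' : 𝓕' ⊆ 𝓕 := Finset.erase_subset _ _
    have hcard' : 𝓕'.card = n := by
      rw [h𝓕', Finset.card_erase_of_mem hF, hcard]; omega
    have hforest' : IsForest 𝓕' := fun 𝓖 h𝓖 hne𝓖 => hforest 𝓖 (h𝓖.trans hsub') hne𝓖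
    obtain ⟨e', v', hv'mem, hv'free⟩ := ih 𝓕' hcard' hforest'
      (fun A hA B hB => hfacet A (hsub' hA) B (hsub' hB))
      (fun A hA => hne A (hsub' hA))
    have hne'F : ∀ i : Fin n, (e' i).1 ≠ F := fun i =>
      (Finset.mem_erase.mp (e' i).2).1
    -- build the equivalence
    refine ⟨⟨Fin.cases ⟨F, hF⟩ (fun i => ⟨(e' i).1, hsub' (e' i).2⟩),
      fun G => if hGF : G.1 = F then 0 else
        (e'.symm ⟨G.1, Finset.mem_erase.mpr ⟨hGF, G.2⟩⟩).succ, ?_, ?_⟩,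
      Fin.cases vF v', ?_, ?_⟩
    · -- left inverse
      intro i
      refine Fin.cases ?_ (fun j => ?_) i
      · simp
      · simp only [Fin.cases_succ]
        refine (dif_neg (hne'F j)).trans ?_
        congr 1
        have : (⟨(e' j).1, Finset.mem_erase.mpr ⟨hne'F j, hsub' (e' j).2⟩⟩ :
            {G // G ∈ 𝓕'}) = e' j := Subtype.ext rfl
        rw [this, Equiv.symm_apply_apply]
    · -- right inverse
      intro G
      dsimp only
      by_cases hGF : G.1 = F
      · rw [dif_pos hGF]
        simp only [Fin.cases_zero]
        exact Subtype.ext hGF.symm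
      · rw [dif_neg hGF]
        simp only [Fin.cases_succ]
        refine Subtype.ext ?_
        rw [Equiv.apply_symm_apply]
    · -- membership
      intro i
      refine Fin.cases ?_ (fun j => ?_) i
      · simpa using hvFF
      · simpa using hv'mem j
    · -- freeness
      intro i j hji
      refine Fin.cases (fun hji => ?_) (fun i' hji => ?_) i hji
      · exact absurd hji (Nat.not_lt_zero _)
      · refine Fin.cases (fun _ => ?_) (fun j' hji => ?_) j hji
        · simp only [Fin.cases_zero, Fin.cases_succ]
          exact hvFfree (e' i').1 (hsub' (e' i').2) (hne'F i')
        · simp only [Fin.cases_succ]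
          exact hv'free i' j' (by exact_mod_cast Nat.succ_lt_succ_iff.mp hji)

/-- The incidence matrix of a simplicial forest with `s` facets has some `s × s` minor
(given by an injective choice of one column per row) equal to `1`; in particular, any
common divisor of all maximal minors is a unit, i.e. the gcd of the maximal minors is `1`. -/
theorem stmt2 {V : Type*} [Fintype V] [DecidableEq V]
    (𝓕 : Finset (Finset V)) (hforest : IsForest 𝓕)
    (hfacet : ∀ F ∈ 𝓕, ∀ G ∈ 𝓕, F ⊆ G → F = G)
    (hne : ∀ F ∈ 𝓕, F.Nonempty)
    (M : Finset V → V → ℤ)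
    (hM : ∀ F v, M F v = if v ∈ F then 1 else 0) :
    (∃ φ : {F // F ∈ 𝓕} → V, Function.Injective φ ∧
        Matrix.det (Matrix.of fun i j : {F // F ∈ 𝓕} => M i.1 (φ j)) = 1) ∧
    ∀ c : ℤ, (∀ φ : {F // F ∈ 𝓕} → V, Function.Injective φ →
        c ∣ Matrix.det (Matrix.of fun i j : {F // F ∈ 𝓕} => M i.1 (φ j))) → IsUnit c := by
  obtain ⟨e, v, hvmem, hvfree⟩ :=
    forest_order 𝓕.card 𝓕 rfl hforest hfacet hne
  have hvinj : Function.Injective v := by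
    intro a b hab
    by_contra hne'
    rcases lt_or_gt_of_ne hne' with h | h
    · exact hvfree b a h (hab ▸ hvmem b)
    · exact hvfree a b h (hab.symm ▸ hvmem a)
  set φ : {F // F ∈ 𝓕} → V := fun G => v (e.symm G) with hφ
  have hφinj : Function.Injective φ := hvinj.comp e.symm.injective
  have hdet : Matrix.det (Matrix.of fun i j : {F // F ∈ 𝓕} => M i.1 (φ j)) = 1 := by
    rw [← Matrix.det_submatrix_equiv_self e]
    have htri : ((Matrix.of fun i j : {F // F ∈ 𝓕} => M i.1 (φ j)).submatrix e e).BlockTriangular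
        id := by
      intro i j hij
      simp only [Matrix.submatrix_apply, Matrix.of_apply, hφ, Equiv.symm_apply_apply, hM]
      exact if_neg (hvfree i j hij)
    rw [Matrix.det_of_upperTriangular htri]
    refine Finset.prod_eq_one fun i _ => ?_
    simp only [Matrix.submatrix_apply, Matrix.of_apply, hφ, Equiv.symm_apply_apply, hM]
    exact if_pos (hvmem i)
  refine ⟨⟨φ, hφinj, hdet⟩, fun c hc => ?_⟩
  exact isUnit_of_dvd_one (hdet ▸ hc φ hφinj)
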